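/- There exist absolute constants c₁, c₂, c₃, c₄ > 0 such that for all κ ∈ (0,1), the unique N_κ ∈ (0,1) with g(N_κ) = π/(2√2 κ) satisfies c₁ e^{-c₂/κ} < 1 - N_κ < c₃ e^{-c₄/κ}. -/

import Mathlib

open MeasureTheory

/-- `g N = ∫_0^{π/2} (2 - N²(1 + sin²θ))^{-1/2} dθ`. -/
noncomputable def g (N : ℝ) : ℝ :=
  ∫ θ in (0:ℝ)..(Real.pi / 2), 1 / Real.sqrt (2 - N ^ 2 * (1 + Real.sin θ ^ 2))

open Real

private lemma denom_pos {N : ℝ} (hN1 : N < 1) (hN0 : 0 < N) (θ : ℝ) :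
    0 < 2 - N ^ 2 * (1 + Real.sin θ ^ 2) := by
  nlinarith [Real.sin_sq_le_one θ, sq_nonneg N]

private lemma integrand_cont {N : ℝ} (hN1 : N < 1) (hN0 : 0 < N) :
    Continuous (fun θ : ℝ => 1 / Real.sqrt (2 - N ^ 2 * (1 + Real.sin θ ^ 2))) := by
  apply Continuous.div continuous_const
  · exact Real.continuous_sqrt.comp (by continuity)
  · intro θ
    exact (Real.sqrt_pos.2 (denom_pos hN1 hN0 θ)).ne'

set_option maxHeartbeats 1000000 in
theorem N_kappa_exponential_bounds :
    ∃ c₁ c₂ c₃ c₄ : ℝ, 0 < c₁ ∧ 0 < c₂ ∧ 0 < c₃ ∧ 0 < c₄ ∧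
      ∀ κ N : ℝ, 0 < κ → κ < 1 → N ∈ Set.Ioo (0:ℝ) 1 →
        g N = Real.pi / (2 * Real.sqrt 2 * κ) →
        c₁ * Real.exp (-c₂ / κ) < 1 - N ∧ 1 - N < c₃ * Real.exp (-c₄ / κ) := by
  refine ⟨1/4, 3, 5, 1/2, by norm_num, by norm_num, by norm_num, by norm_num, ?_⟩
  intro κ N hκ0 hκ1 hN hgN
  obtain ⟨hN0, hN1⟩ := hN
  have hπ : 0 < π := Real.pi_pos
  have hπ3 : 3 < π := Real.pi_gt_three
  have h1N : (0:ℝ) < 1 - N := by linarith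
  set s : ℝ := Real.sqrt (1 - N) with hs_def
  have hs0 : 0 < s := Real.sqrt_pos.2 h1N
  have hs1 : s ≤ 1 := Real.sqrt_le_one.mpr (by linarith)
  have hssq : s ^ 2 = 1 - N := Real.sq_sqrt h1N.le
  have hlogs : Real.log s = Real.log (1 - N) / 2 := Real.log_sqrt h1N.le
  have hsqrt2 : (0:ℝ) < Real.sqrt 2 := Real.sqrt_pos.2 (by norm_num)
  have hsqrt2sq : Real.sqrt 2 ^ 2 = 2 := Real.sq_sqrt (by norm_num)
  have hsqrt2lt : Real.sqrt 2 < 3/2 := by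
    nlinarith [Real.sqrt_nonneg 2]
  have hsqrt2gt : (7/5 : ℝ) < Real.sqrt 2 := by
    nlinarith [Real.sqrt_nonneg 2]
  set G : ℝ := π / (2 * Real.sqrt 2 * κ) with hG_def
  have hG0 : 0 < G := by positivity
  have hf_cont := integrand_cont hN1 hN0
  have hab : (0:ℝ) ≤ π / 2 := by linarith
  -- == Upper bound on g: g N ≤ π log (s+1) - π log s ==
  have hupper : g N ≤ π * Real.log (s + 1) - π * Real.log s := by
    have hcomp_cont : ContinuousOn (fun θ : ℝ => 2 / (s + 2/π * (π/2 - θ)))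
        (Set.uIcc (0:ℝ) (π/2)) := by
      apply ContinuousOn.div continuousOn_const
      · exact (by continuity : Continuous fun θ : ℝ => s + 2/π * (π/2 - θ)).continuousOn
      · intro x hx
        rw [Set.uIcc_of_le hab] at hx
        have hx2 : (0:ℝ) ≤ π/2 - x := by linarith [hx.2]
        have : 0 < s + 2/π * (π/2 - x) := by positivity
        exact this.ne'
    have hmono : g N ≤ ∫ θ in (0:ℝ)..(π/2), 2 / (s + 2/π * (π/2 - θ)) := by
      unfold g
      apply intervalIntegral.integral_mono_on hab
        (hf_cont.intervalIntegrable 0 (π/2))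
        (hcomp_cont.intervalIntegrable)
      intro x hx
      have hx1 : 0 ≤ x := hx.1
      have hx2 : x ≤ π/2 := hx.2
      set u : ℝ := π/2 - x with hu_def
      have hu0 : 0 ≤ u := by simp [hu_def]; linarith
      have hu2 : u ≤ π/2 := by simp [hu_def]; linarith
      have hsin : 2/π * u ≤ Real.sin u := Real.mul_le_sin hu0 hu2
      have hcos : Real.cos x = Real.sin u := by
        rw [hu_def, Real.sin_pi_div_two_sub]
      have ht0 : 0 ≤ 2/π * u := by positivity
      have hcos2 : (2/π * u) ^ 2 ≤ Real.cos x ^ 2 := by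
        rw [hcos]; exact pow_le_pow_left₀ ht0 hsin 2
      have hd := denom_pos hN1 hN0 x
      have hkey : ((s + 2/π * u)/2) ^ 2 ≤ 2 - N ^ 2 * (1 + Real.sin x ^ 2) := by
        have hpyth := Real.sin_sq_add_cos_sq x
        have hN2 : (0:ℝ) ≤ 1 - N ^ 2 := by nlinarith
        have step1 : ((s + 2/π * u)/2) ^ 2 ≤ s ^ 2 + (2/π * u) ^ 2 := by
          nlinarith [sq_nonneg (s - 2/π * u), sq_nonneg (s + 2/π * u)]
        have step2 : s ^ 2 + (2/π * u) ^ 2 ≤ (1 - N) + Real.cos x ^ 2 := by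
          rw [hssq]; linarith
        have step3 : (1 - N) + Real.cos x ^ 2 ≤ 2 - N ^ 2 * (1 + Real.sin x ^ 2) := by
          nlinarith [mul_nonneg (sq_nonneg (Real.sin x)) hN2, mul_pos hN0 h1N]
        linarith
      have hst : 0 < (s + 2/π * u)/2 := by positivity
      have hsqrtge : (s + 2/π * u)/2 ≤ Real.sqrt (2 - N ^ 2 * (1 + Real.sin x ^ 2)) := by
        calc (s + 2/π * u)/2 = Real.sqrt (((s + 2/π * u)/2) ^ 2) :=
              (Real.sqrt_sq hst.le).symm
          _ ≤ _ := Real.sqrt_le_sqrt hkey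
      calc 1 / Real.sqrt (2 - N ^ 2 * (1 + Real.sin x ^ 2))
          ≤ 1 / ((s + 2/π * u)/2) := one_div_le_one_div_of_le hst hsqrtge
        _ = 2 / (s + 2/π * u) := by rw [one_div_div]
    have hval : (∫ θ in (0:ℝ)..(π/2), 2 / (s + 2/π * (π/2 - θ)))
        = π * Real.log (s + 1) - π * Real.log s := by
      have hderiv : ∀ x ∈ Set.uIcc (0:ℝ) (π/2),
          HasDerivAt (fun θ : ℝ => -π * Real.log (s + 2/π * (π/2 - θ)))
            (2 / (s + 2/π * (π/2 - x))) x := by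
        intro x hx
        rw [Set.uIcc_of_le hab] at hx
        have hx2 : (0:ℝ) ≤ π/2 - x := by linarith [hx.2]
        have hin : 0 < s + 2/π * (π/2 - x) := by positivity
        have h1 : HasDerivAt (fun θ : ℝ => s + 2/π * (π/2 - θ)) (2/π * (-1)) x := by
          exact (((hasDerivAt_id x).const_sub (π/2)).const_mul (2/π)).const_add s
        have h2 := (h1.log hin.ne').const_mul (-π)
        exact h2.congr_deriv (by field_simp)
      have h := intervalIntegral.integral_eq_sub_of_hasDerivAt hderiv
        (hcomp_cont.intervalIntegrable)
      rw [h]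
      have e1 : s + 2/π * (π/2 - π/2) = s := by ring
      have e2 : s + 2/π * (π/2 - 0) = s + 1 := by field_simp; ring
      rw [e1, e2]; ring
    rw [hval] at hmono; exact hmono
  -- == Lower bound on g: log(2s+π/2) - log(2s) ≤ g N ==
  have hlower : Real.log (2*s + π/2) - Real.log (2*s) ≤ g N := by
    have hcomp_cont : ContinuousOn (fun θ : ℝ => 1 / (2*s + (π/2 - θ)))
        (Set.uIcc (0:ℝ) (π/2)) := by
      apply ContinuousOn.div continuousOn_const
      · exact (by continuity : Continuous fun θ : ℝ => 2*s + (π/2 - θ)).continuousOn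
      · intro x hx
        rw [Set.uIcc_of_le hab] at hx
        have hx2 : (0:ℝ) ≤ π/2 - x := by linarith [hx.2]
        have : 0 < 2*s + (π/2 - x) := by positivity
        exact this.ne'
    have hmono : (∫ θ in (0:ℝ)..(π/2), 1 / (2*s + (π/2 - θ))) ≤ g N := by
      unfold g
      apply intervalIntegral.integral_mono_on hab
        (hcomp_cont.intervalIntegrable)
        (hf_cont.intervalIntegrable 0 (π/2))
      intro x hx
      have hx1 : 0 ≤ x := hx.1
      have hx2 : x ≤ π/2 := hx.2
      set u : ℝ := π/2 - x with hu_def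
      have hu0 : 0 ≤ u := by simp [hu_def]; linarith
      have hu2 : u ≤ π/2 := by simp [hu_def]; linarith
      have hsinle : Real.sin u ≤ u := Real.sin_le hu0
      have huπ : u ≤ π := le_trans hu2 (by linarith)
      have hsinnn : 0 ≤ Real.sin u := Real.sin_nonneg_of_nonneg_of_le_pi hu0 huπ
      have hcos : Real.cos x = Real.sin u := by
        rw [hu_def, Real.sin_pi_div_two_sub]
      have hcos2 : Real.cos x ^ 2 ≤ u ^ 2 := by
        rw [hcos]; exact pow_le_pow_left₀ hsinnn hsinle 2
      have hd := denom_pos hN1 hN0 x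
      have hkey : 2 - N ^ 2 * (1 + Real.sin x ^ 2) ≤ (2*s + u) ^ 2 := by
        have hpyth := Real.sin_sq_add_cos_sq x
        have hN2 : (0:ℝ) ≤ 1 - N ^ 2 := by nlinarith
        have step1 : 2 - N ^ 2 * (1 + Real.sin x ^ 2) ≤ 2 * (1 - N ^ 2) + Real.cos x ^ 2 := by
          nlinarith [mul_nonneg (sq_nonneg (Real.cos x)) hN2]
        have step2 : 2 * (1 - N ^ 2) + Real.cos x ^ 2 ≤ 4 * (1 - N) + u ^ 2 := by
          nlinarith
        have step3 : 4 * (1 - N) + u ^ 2 ≤ (2*s + u) ^ 2 := by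
          nlinarith [mul_nonneg hs0.le hu0, hssq]
        linarith
      have hsqrtle : Real.sqrt (2 - N ^ 2 * (1 + Real.sin x ^ 2)) ≤ 2*s + u := by
        calc Real.sqrt (2 - N ^ 2 * (1 + Real.sin x ^ 2))
            ≤ Real.sqrt ((2*s + u) ^ 2) := Real.sqrt_le_sqrt hkey
          _ = 2*s + u := Real.sqrt_sq (by positivity)
      exact one_div_le_one_div_of_le (Real.sqrt_pos.2 hd) hsqrtle
    have hval : (∫ θ in (0:ℝ)..(π/2), 1 / (2*s + (π/2 - θ)))
        = Real.log (2*s + π/2) - Real.log (2*s) := by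
      have hderiv : ∀ x ∈ Set.uIcc (0:ℝ) (π/2),
          HasDerivAt (fun θ : ℝ => -Real.log (2*s + (π/2 - θ)))
            (1 / (2*s + (π/2 - x))) x := by
        intro x hx
        rw [Set.uIcc_of_le hab] at hx
        have hx2 : (0:ℝ) ≤ π/2 - x := by linarith [hx.2]
        have hin : 0 < 2*s + (π/2 - x) := by positivity
        have h1 : HasDerivAt (fun θ : ℝ => 2*s + (π/2 - θ)) (-1) x :=
          ((hasDerivAt_id x).const_sub (π/2)).const_add (2*s)
        have h2 := (h1.log hin.ne').neg
        exact h2.congr_deriv (by field_simp)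
      have h := intervalIntegral.integral_eq_sub_of_hasDerivAt hderiv
        (hcomp_cont.intervalIntegrable)
      rw [h]
      have e1 : 2*s + (π/2 - π/2) = 2*s := by ring
      have e2 : 2*s + (π/2 - 0) = 2*s + π/2 := by ring
      rw [e1, e2]; ring
    rw [← hval]; exact hmono
  rw [hgN] at hupper hlower
  -- == derive log bounds ==
  constructor
  · -- lower bound on 1 - N
    have hlog1 : 0 ≤ Real.log (2*s + π/2) :=
      Real.log_nonneg (by linarith)
    have hlog2s : Real.log (2*s) = Real.log 2 + Real.log (1-N) / 2 := by
      rw [Real.log_mul (by norm_num) hs0.ne', hlogs]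
    have hLge : -2 * G - 2 * Real.log 2 ≤ Real.log (1 - N) := by
      have : -Real.log (2*s) ≤ G := by linarith
      rw [hlog2s] at this; linarith
    have h1 : Real.exp (-2*G - 2*Real.log 2) ≤ 1 - N := by
      calc Real.exp (-2*G - 2*Real.log 2) ≤ Real.exp (Real.log (1-N)) :=
            Real.exp_le_exp.2 hLge
        _ = 1 - N := Real.exp_log h1N
    have hexp2 : Real.exp (2 * Real.log 2) = 4 := by
      rw [show (2:ℝ) * Real.log 2 = Real.log 2 + Real.log 2 by ring, Real.exp_add,
        Real.exp_log (by norm_num : (0:ℝ) < 2)]; norm_num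
    have h2 : Real.exp (-2*G - 2*Real.log 2) = Real.exp (-2*G) / 4 := by
      rw [Real.exp_sub, hexp2]
    have h2G : 2 * G = π / (Real.sqrt 2 * κ) := by
      rw [hG_def]; field_simp
    have hπlt : π < 3 * Real.sqrt 2 := by
      nlinarith [Real.pi_lt_d2]
    have hGlt : 2 * G < 3 / κ := by
      rw [h2G, div_lt_div_iff₀ (by positivity) hκ0]
      nlinarith [mul_lt_mul_of_pos_right hπlt hκ0]
    have hstrict : Real.exp (-(3/κ)) < Real.exp (-2*G) :=
      Real.exp_lt_exp.2 (by linarith)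
    have : (1/4 : ℝ) * Real.exp (-3/κ) < Real.exp (-2*G) / 4 := by
      rw [show (-3)/κ = -(3/κ) by ring]
      linarith
    linarith [h2 ▸ h1]
  · -- upper bound on 1 - N
    have hlogsum : Real.log (s + 1) ≤ Real.log 2 :=
      Real.log_le_log (by linarith) (by linarith)
    have hGle : G ≤ π * Real.log 2 - π * (Real.log (1-N) / 2) := by
      rw [← hlogs]
      linarith [mul_le_mul_of_nonneg_left hlogsum hπ.le]
    have hLle : Real.log (1 - N) ≤ 2 * Real.log 2 - 2 * G / π := by
      have hexpand : π * (2 * Real.log 2 - 2 * G / π) = 2 * π * Real.log 2 - 2 * G := by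
        field_simp
      have hmul : π * Real.log (1 - N) ≤ π * (2 * Real.log 2 - 2 * G / π) := by
        rw [hexpand]; linarith
      exact le_of_mul_le_mul_left hmul hπ
    have h1 : 1 - N ≤ Real.exp (2*Real.log 2 - 2*G/π) := by
      calc 1 - N = Real.exp (Real.log (1-N)) := (Real.exp_log h1N).symm
        _ ≤ _ := Real.exp_le_exp.2 (by linarith)
    have hexp2 : Real.exp (2 * Real.log 2) = 4 := by
      rw [show (2:ℝ) * Real.log 2 = Real.log 2 + Real.log 2 by ring, Real.exp_add,
        Real.exp_log (by norm_num : (0:ℝ) < 2)]; norm_num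
    have h2 : Real.exp (2*Real.log 2 - 2*G/π) = 4 * Real.exp (-(2*G/π)) := by
      rw [Real.exp_sub, hexp2, Real.exp_neg]; field_simp
    have hGgt : 1/(2*κ) < 2 * G / π := by
      have h2Gπ : 2 * G / π = 1 / (Real.sqrt 2 * κ) := by
        rw [hG_def]; field_simp
      rw [h2Gπ, div_lt_div_iff₀ (by positivity) (by positivity)]
      nlinarith
    have hstrict : Real.exp (-(2*G/π)) < Real.exp (-(1/(2*κ))) :=
      Real.exp_lt_exp.2 (by linarith)
    have : 1 - N < 5 * Real.exp (-(1/(2*κ))) := by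
      have hpos : 0 < Real.exp (-(1/(2*κ))) := Real.exp_pos _
      calc 1 - N ≤ 4 * Real.exp (-(2*G/π)) := by rw [← h2]; exact h1
        _ < 4 * Real.exp (-(1/(2*κ))) := by nlinarith
        _ < 5 * Real.exp (-(1/(2*κ))) := by nlinarith
    have heq : -(1/2:ℝ)/κ = -(1/(2*κ)) := by field_simp
    rw [heq]; exact this
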